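/- arXiv:1304.4913 — 2 statements merged into one kernel-verified Lean document; each statement's English description precedes it below -/
import Mathlib

section
/- Let F: ℝ_{>0} → ℂ be a bounded function, and suppose there exist constants c > 0 and C > 0 such that |F(y)| ≤ c·y^{−N}·(CN)^{CN} for every integer N ≥ 1 and every y > 0. Then there exist constants d > 0 and D > 0 such that |F(y)| ≤ D·exp(−y^d) for all y > 0. -/
set_option maxHeartbeats 1000000


/-- A bounded function on `ℝ_{>0}` satisfying the uniform rapid-decay bounds
`|F(y)| ≤ c·y^{−N}·(CN)^{CN}` for all `N ≥ 1` decays like a stretched exponential: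
`|F(y)| ≤ D·exp(−y^d)` for some `d, D > 0`. -/
theorem rapid_decay_implies_exponential_decay (F : ℝ → ℂ)
    (hbdd : ∃ B : ℝ, ∀ y : ℝ, 0 < y → ‖F y‖ ≤ B)
    (c C : ℝ) (hc : 0 < c) (hC : 0 < C)
    (hdecay : ∀ N : ℕ, 1 ≤ N → ∀ y : ℝ, 0 < y →
      ‖F y‖ ≤ c * y ^ (-(N : ℝ)) * (C * N) ^ (C * N)) :
    ∃ d > (0:ℝ), ∃ D > (0:ℝ), ∀ y : ℝ, 0 < y → ‖F y‖ ≤ D * Real.exp (-(y ^ d)) := by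
  obtain ⟨B, hB⟩ := hbdd
  set A : ℝ := max C 1 with hAdef
  have hA1 : (1:ℝ) ≤ A := le_max_right _ _
  have hA0 : (0:ℝ) < A := lt_of_lt_of_le one_pos hA1
  have hCA : C ≤ A := le_max_left _ _
  set d : ℝ := 1/(4*A) with hd
  have hd0 : 0 < d := by positivity
  have hAd : A * d = 1/4 := by rw [hd]; field_simp
  set g : ℝ := Real.log (2*A) with hg
  have hg0 : 0 ≤ g := Real.log_nonneg (by linarith)
  set y₀ : ℝ := max (Real.exp 2) (Real.exp (4*A*g)) with hy₀
  have hy₀1 : 1 ≤ y₀ := by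
    have h1 : (1:ℝ) ≤ Real.exp 2 := Real.one_le_exp (by norm_num)
    exact h1.trans (le_max_left _ _)
  have hD0 : (0:ℝ) < (c + |B| + 1) * Real.exp (y₀ ^ d) := by positivity
  refine ⟨d, hd0, (c + |B| + 1) * Real.exp (y₀ ^ d), hD0, ?_⟩
  intro y hy
  by_cases hcase : y < y₀
  · -- small y : use boundedness
    have h1 : ‖F y‖ ≤ |B| := (hB y hy).trans (le_abs_self B)
    have h2 : y ^ d ≤ y₀ ^ d := Real.rpow_le_rpow hy.le hcase.le hd0.le
    have h3 : (1:ℝ) ≤ Real.exp (y₀ ^ d) * Real.exp (-(y ^ d)) := by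
      rw [← Real.exp_add]
      have : (0:ℝ) ≤ y₀ ^ d + -(y ^ d) := by linarith
      simpa using Real.exp_le_exp.mpr this
    calc ‖F y‖ ≤ |B| := h1
      _ ≤ (c + |B| + 1) * (Real.exp (y₀ ^ d) * Real.exp (-(y ^ d))) := by
          nlinarith [abs_nonneg B, hc]
      _ = (c + |B| + 1) * Real.exp (y₀ ^ d) * Real.exp (-(y ^ d)) := by ring
  · -- large y
    push_neg at hcase
    have hy1 : 1 ≤ y := hy₀1.trans hcase
    set L : ℝ := Real.log y with hL
    have hL2 : 2 ≤ L := by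
      rw [hL, Real.le_log_iff_exp_le hy]
      exact (le_max_left _ _).trans hcase
    have hL4 : 4*A*g ≤ L := by
      rw [hL, Real.le_log_iff_exp_le hy]
      exact (le_max_right _ _).trans hcase
    set N : ℕ := ⌈y ^ d⌉₊ with hN
    have hyd0 : 0 < y ^ d := Real.rpow_pos_of_pos hy d
    have hyd1 : 1 ≤ y ^ d := Real.one_le_rpow hy1 hd0.le
    have hN1 : y ^ d ≤ (N:ℝ) := Nat.le_ceil _
    have hNpos : 1 ≤ N := Nat.one_le_ceil_iff.mpr hyd0
    have hNpos' : (1:ℝ) ≤ (N:ℝ) := by exact_mod_cast hNpos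
    have hN2 : (N:ℝ) ≤ 2 * y ^ d := by
      have := Nat.ceil_lt_add_one hyd0.le
      rw [← hN] at this
      linarith
    have hbound := hdecay N hNpos y hy
    -- replace (C*N)^(C*N) by (A*N)^(A*N)
    have hCN0 : (0:ℝ) < C * N := by positivity
    have hAN1 : (1:ℝ) ≤ A * N := by nlinarith
    have hCN : (C * (N:ℝ)) ^ (C * (N:ℝ)) ≤ (A * (N:ℝ)) ^ (A * (N:ℝ)) := by
      have hle : C * (N:ℝ) ≤ A * (N:ℝ) := by nlinarith
      rcases le_or_gt (C * (N:ℝ)) 1 with h | h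
      · have h1 : (C * (N:ℝ)) ^ (C * (N:ℝ)) ≤ 1 :=
          Real.rpow_le_one hCN0.le h hCN0.le
        have h2 : (1:ℝ) ≤ (A * (N:ℝ)) ^ (A * (N:ℝ)) :=
          Real.one_le_rpow hAN1 (by positivity)
        linarith
      · calc (C * (N:ℝ)) ^ (C * (N:ℝ)) ≤ (A * (N:ℝ)) ^ (C * (N:ℝ)) :=
              Real.rpow_le_rpow hCN0.le hle (by positivity)
          _ ≤ (A * (N:ℝ)) ^ (A * (N:ℝ)) :=
              Real.rpow_le_rpow_of_exponent_le hAN1 hle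
    have hbound2 : ‖F y‖ ≤ c * y ^ (-(N:ℝ)) * (A * (N:ℝ)) ^ (A * (N:ℝ)) := by
      exact hbound.trans (mul_le_mul_of_nonneg_left hCN
        (by positivity : (0:ℝ) ≤ c * y ^ (-(N:ℝ))))
    -- rewrite rpow as exp
    have e1 : y ^ (-(N:ℝ)) = Real.exp (L * (-(N:ℝ))) := by
      rw [Real.rpow_def_of_pos hy, hL]
    have e2 : (A * (N:ℝ)) ^ (A * (N:ℝ)) =
        Real.exp (Real.log (A * (N:ℝ)) * (A * (N:ℝ))) := by
      rw [Real.rpow_def_of_pos (by positivity)]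
    have hlogAN : Real.log (A * (N:ℝ)) ≤ g + d * L := by
      have hle : A * (N:ℝ) ≤ (2*A) * y ^ d := by nlinarith
      have h5 : Real.log (A * (N:ℝ)) ≤ Real.log ((2*A) * y ^ d) :=
        Real.log_le_log (by positivity) hle
      have h6 : Real.log ((2*A) * y ^ d) = g + d * L := by
        rw [Real.log_mul (by positivity) (by positivity), Real.log_rpow hy, hg, hL]
      linarith
    -- key exponent estimate
    have hkey : L * (-(N:ℝ)) + Real.log (A * (N:ℝ)) * (A * (N:ℝ)) ≤ -(y ^ d) := by
      have h1 : Real.log (A * (N:ℝ)) * (A * (N:ℝ)) ≤ (g + d * L) * (A * (N:ℝ)) := by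
        have := mul_le_mul_of_nonneg_right hlogAN (by positivity : (0:ℝ) ≤ A * (N:ℝ))
        linarith
      have h2 : (g + d * L) * (A * (N:ℝ)) = A * g * N + (A*d) * L * N := by ring
      have h3 : A * g * (N:ℝ) ≤ (L/4) * N := by
        have hAg : A * g ≤ L / 4 := by linarith
        nlinarith
      have h4 : (0:ℝ) ≤ (N:ℝ) * (L - 2) := by nlinarith
      rw [hAd] at h2
      nlinarith
    calc ‖F y‖ ≤ c * y ^ (-(N:ℝ)) * (A * (N:ℝ)) ^ (A * (N:ℝ)) := hbound2
      _ = c * Real.exp (L * (-(N:ℝ)) + Real.log (A * (N:ℝ)) * (A * (N:ℝ))) := by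
          rw [e1, e2, mul_assoc, ← Real.exp_add]
      _ ≤ c * Real.exp (-(y ^ d)) := by
          have := Real.exp_le_exp.mpr hkey
          nlinarith
      _ ≤ (c + |B| + 1) * Real.exp (y₀ ^ d) * Real.exp (-(y ^ d)) := by
          have h1 : (1:ℝ) ≤ Real.exp (y₀ ^ d) := by
            rw [show (1:ℝ) = Real.exp 0 from (Real.exp_zero).symm]
            exact Real.exp_le_exp.mpr (by positivity)
          have h2 : (0:ℝ) < Real.exp (-(y ^ d)) := Real.exp_pos _
          have h3 : c ≤ (c + |B| + 1) * Real.exp (y₀ ^ d) := by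
            nlinarith [abs_nonneg B]
          exact mul_le_mul_of_nonneg_right h3 h2.le
end

section
/- Let Ŵ be the affine Weyl group of a finite crystallographic root system Δ, acting on the affine root system Δ̂_W = {α + nι : α ∈ Δ, n ∈ ℤ} with simple roots a₁,…,a_{ℓ+1} where a_i = α_i for i ≤ ℓ. Let W^θ = {w ∈ Ŵ : w^{-1}α_i > 0 for i = 1,…,ℓ} be the set of minimal-length coset representatives for W\Ŵ. If w ∈ W^θ and w^{-1}α_i = σ_i + κ_i(w^{-1})·ι with σ_i ∈ Δ and κ_i(w^{-1}) ∈ ℤ_{≥0}, then κ_i(w^{-1}) ≤ ℓ(w) + 1. -/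
open Finset

/-- For a Kostant coset representative `w ∈ W^θ` in the affine Weyl group, writing
`w⁻¹α_i = σ_i + κ_i(w⁻¹)·ι`, one has `κ_i(w⁻¹) ≤ ℓ(w) + 1`, where `ℓ(w)` is realized as the
cardinality of the inversion set of `w`.  The affine real roots are modeled as pairs
`(α, n) ∈ V × ℝ` with `α` a classical root and `n ∈ ℤ` the coefficient of the minimal
imaginary root `ι = (0,1)`, and `u` models the (linear) action of `w⁻¹`. -/
theorem kostant_rep_kappa_le_length_add_one
    {V : Type*} [AddCommGroup V] [Module ℝ V] {l : ℕ}
    (Δplus : Set V) (αs : Fin l → V) (hαs : ∀ i, αs i ∈ Δplus)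
    (Δ : Set V) (hΔ : Δ = Δplus ∪ (-Δplus))
    (Φ : Set (V × ℝ)) (hΦ : Φ = {p : V × ℝ | p.1 ∈ Δ ∧ ∃ m : ℤ, p.2 = (m : ℝ)})
    (pos : V × ℝ → Prop) (hposdef : ∀ p, pos p ↔ (0 < p.2 ∨ (p.2 = 0 ∧ p.1 ∈ Δplus)))
    (u : (V × ℝ) ≃ₗ[ℝ] (V × ℝ))            -- the action of w⁻¹ on the affine roots
    (hu : ∀ p ∈ Φ, u p ∈ Φ)
    (huι : u (0, 1) = (0, 1))               -- w⁻¹ fixes the imaginary root ι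
    (hW : ∀ i, pos (u (αs i, 0)))           -- w ∈ W^θ
    (Inv : Set (V × ℝ)) (hInv : Inv = {p ∈ Φ | pos p ∧ ¬ pos (u p)})
    (hfin : Inv.Finite)                     -- ℓ(w) = Inv.ncard, the inversion number of w
    (i : Fin l) (σ : V) (hσ : σ ∈ Δ) (κ : ℤ) (hκ : 0 ≤ κ)
    (hval : u (αs i, 0) = (σ, (κ : ℝ))) :   -- w⁻¹α_i = σ_i + κ_i(w⁻¹)·ι
    κ ≤ (Inv.ncard : ℤ) + 1 := by
  classical
  rcases le_or_gt κ 1 with h | h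
  · have h0 : (0:ℤ) ≤ (Inv.ncard : ℤ) := Int.ofNat_nonneg _
    omega
  · set f : ℤ → V × ℝ := fun n => (-(αs i), (n : ℝ)) with hf
    have key : ∀ n : ℤ, 1 ≤ n → n ≤ κ - 1 → f n ∈ Inv := by
      intro n h1 h2
      have hmem : f n ∈ Φ := by
        rw [hΦ]
        refine ⟨?_, ⟨n, rfl⟩⟩
        rw [hΔ]
        right
        simpa [hf] using hαs i
      have hlin : f n = (n : ℝ) • ((0:V), (1:ℝ)) - (αs i, 0) := by
        simp [hf, Prod.ext_iff]
      have hun : u (f n) = (-σ, (n : ℝ) - κ) := by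
        rw [hlin, map_sub, map_smul, huι, hval]
        simp [Prod.ext_iff]
      rw [hInv]
      refine ⟨hmem, ?_, ?_⟩
      · rw [hposdef]
        left
        have : (0:ℝ) < (n:ℝ) := by exact_mod_cast lt_of_lt_of_le one_pos h1
        simpa [hf] using this
      · rw [hun, hposdef]
        push_neg
        have hlt : (n:ℝ) - κ < 0 := by
          have : (n:ℝ) < κ := by exact_mod_cast lt_of_le_of_lt h2 (by omega)
          linarith
        constructor
        · simpa using le_of_lt hlt
        · intro habs
          exact absurd habs (ne_of_lt hlt)
    have hsub : (f '' ↑(Finset.Icc 1 (κ-1))) ⊆ Inv := by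
      rintro _ ⟨n, hn, rfl⟩
      simp only [Finset.coe_Icc, Set.mem_Icc] at hn
      exact key n hn.1 hn.2
    have hinj : Set.InjOn f ↑(Finset.Icc 1 (κ-1)) := by
      intro a _ b _ hab
      have h2 := congrArg Prod.snd hab
      simp only [hf] at h2
      exact_mod_cast h2
    have hcard := Set.ncard_le_ncard hsub hfin
    rw [Set.ncard_image_of_injOn hinj, Set.ncard_coe_finset, Int.card_Icc] at hcard
    omega
end
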